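/- If s and t are coprime integers ≥ 2, then for every n the number of partitions of n that are simultaneously s-regular and t-distinct equals the number of partitions of n that are simultaneously s-regular and t-regular. -/

import Mathlib

namespace GlaisherAux

open Multiset Finset

/-- the `t`-adic valuation -/
def ford (t a : ℕ) : ℕ := padicValNat t a

/-- the `t`-free part -/
def fcore (t a : ℕ) : ℕ := a / t ^ ford t a

lemma decomp (t a : ℕ) : t ^ ford t a * fcore t a = a :=
  Nat.mul_div_cancel' (pow_padicValNat_dvd (p := t) (n := a))

lemma fcore_pos {t a : ℕ} (ha : 0 < a) : 0 < fcore t a := by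
  rcases Nat.eq_zero_or_pos (fcore t a) with h | h
  · have := decomp t a; rw [h, mul_zero] at this; omega
  · exact h

lemma not_dvd_fcore {t a : ℕ} (ht : 2 ≤ t) (ha : 0 < a) : ¬ t ∣ fcore t a := by
  rintro ⟨c, hc⟩
  have h : t ^ (ford t a + 1) ∣ a := by
    refine ⟨c, ?_⟩
    conv_lhs => rw [← decomp t a, hc]
    ring
  have := (Nat.pow_dvd_iff_le_padicValNat (by omega) (by omega)).1 h
  unfold ford at *; omega

lemma ford_pow_mul {t c : ℕ} (ht : 2 ≤ t) (hc : 0 < c) (hcd : ¬ t ∣ c) (k : ℕ) :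
    ford t (t ^ k * c) = k := by
  have h0 : ford t c = 0 := by
    by_contra h
    have : t ∣ c := by
      have := pow_padicValNat_dvd (p := t) (n := c)
      refine dvd_trans ?_ this
      exact dvd_pow_self t (by unfold ford at h; omega)
    exact hcd this
  have := padicValNat_base_pow_mul (p := t) (n := c) (by omega) (by omega) k
  unfold ford at *; omega

lemma fcore_pow_mul {t c : ℕ} (ht : 2 ≤ t) (hc : 0 < c) (hcd : ¬ t ∣ c) (k : ℕ) :
    fcore t (t ^ k * c) = c := by
  have hp : 0 < t ^ k := Nat.pow_pos (by omega)
  unfold fcore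
  rw [ford_pow_mul ht hc hcd, Nat.mul_div_cancel_left _ hp]

lemma pow_mul_inj {t c c' k k' : ℕ} (ht : 2 ≤ t) (hc : 0 < c) (hcd : ¬ t ∣ c)
    (hc' : 0 < c') (hcd' : ¬ t ∣ c') (h : t ^ k * c = t ^ k' * c') : k = k' ∧ c = c' := by
  have h1 : k = k' := by
    have := ford_pow_mul ht hc hcd k
    have := ford_pow_mul ht hc' hcd' k'
    rw [h] at *; omega
  subst h1
  have hp : 0 < t ^ k := Nat.pow_pos (by omega)
  exact ⟨rfl, Nat.eq_of_mul_eq_mul_left hp h⟩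

/-- decomposition of any positive number -/
lemma exists_decomp {t a : ℕ} (ht : 2 ≤ t) (ha : 0 < a) :
    ∃ k c, 0 < c ∧ ¬ t ∣ c ∧ a = t ^ k * c :=
  ⟨ford t a, fcore t a, fcore_pos ha, not_dvd_fcore ht ha, (decomp t a).symm⟩

/-! ### digit lemmas -/

lemma mod_pow_succ {t f K : ℕ} (ht : 2 ≤ t) :
    f % t ^ (K + 1) = t ^ K * (f / t ^ K % t) + f % t ^ K := by
  have hp : 0 < t ^ K := Nat.pow_pos (by omega)
  set q := f / t ^ K with hq
  set r := f % t ^ K with hr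
  have hf : f = t ^ (K + 1) * (q / t) + (t ^ K * (q % t) + r) := by
    have h1 : t ^ K * q + r = f := Nat.div_add_mod f (t ^ K)
    have h2 : t * (q / t) + q % t = q := Nat.div_add_mod q t
    calc f = t ^ K * q + r := h1.symm
      _ = t ^ K * (t * (q / t) + q % t) + r := by rw [h2]
      _ = t ^ (K + 1) * (q / t) + (t ^ K * (q % t) + r) := by ring
  have hx : t ^ K * (q % t) + r < t ^ (K + 1) := by
    have h3 : q % t ≤ t - 1 := by
      have := Nat.mod_lt q (show 0 < t by omega); omega
    have hr' : r < t ^ K := Nat.mod_lt _ hp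
    have h4 : t ^ K * (q % t) ≤ t ^ K * (t - 1) := Nat.mul_le_mul_left _ h3
    have h5 : t ^ K * (t - 1) + t ^ K = t ^ K * t := by
      have h6 : t - 1 + 1 = t := by omega
      rw [← Nat.mul_succ, Nat.succ_eq_add_one, h6]
    rw [pow_succ]
    omega
  rw [hf, Nat.mul_add_mod, Nat.mod_eq_of_lt hx]

lemma digit_sum_mod {t : ℕ} (ht : 2 ≤ t) (f K : ℕ) :
    ∑ k ∈ Finset.range K, t ^ k * (f / t ^ k % t) = f % t ^ K := by
  induction K with
  | zero => simp [Nat.mod_one]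
  | succ K ih =>
      rw [Finset.sum_range_succ, ih, mod_pow_succ ht]; omega

lemma digit_sum {t f K : ℕ} (ht : 2 ≤ t) (hK : f < t ^ K) :
    ∑ k ∈ Finset.range K, t ^ k * (f / t ^ k % t) = f := by
  rw [digit_sum_mod ht, Nat.mod_eq_of_lt hK]

lemma lt_pow_self' {t K : ℕ} (ht : 2 ≤ t) : K < t ^ K :=
  Nat.lt_of_lt_of_le Nat.lt_two_pow_self (Nat.pow_le_pow_left ht K)

lemma partial_lt {t K : ℕ} (ht : 2 ≤ t) {d : ℕ → ℕ} (hd : ∀ j, d j < t) :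
    ∑ j ∈ Finset.range K, t ^ j * d j < t ^ K := by
  induction K with
  | zero => simp
  | succ K ih =>
      rw [Finset.sum_range_succ, pow_succ]
      have h1 : t ^ K * d K ≤ t ^ K * (t - 1) :=
        Nat.mul_le_mul_left _ (by have := hd K; omega)
      have h2 : t ^ K * (t - 1) + t ^ K = t ^ K * t := by
        have h3 : t - 1 + 1 = t := by omega
        rw [← Nat.mul_succ, Nat.succ_eq_add_one, h3]
      omega

lemma digit_extract {t : ℕ} (ht : 2 ≤ t) (d : ℕ → ℕ) (hd : ∀ j, d j < t) (K k : ℕ) :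
    (∑ j ∈ Finset.range K, t ^ j * d j) / t ^ k % t = if k < K then d k else 0 := by
  by_cases hk : k < K
  · rw [if_pos hk]
    have hsplit : ∑ j ∈ Finset.range K, t ^ j * d j =
        (∑ j ∈ Finset.range k, t ^ j * d j) + t ^ k * d k +
          ∑ j ∈ Finset.Ico (k + 1) K, t ^ j * d j := by
      rw [← Finset.sum_range_succ, ← Finset.sum_range_add_sum_Ico _ (by omega : k + 1 ≤ K)]
    have htail : ∑ j ∈ Finset.Ico (k + 1) K, t ^ j * d j =
        t ^ (k + 1) * ∑ i ∈ Finset.range (K - (k + 1)), t ^ i * d (k + 1 + i) := by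
      rw [Finset.sum_Ico_eq_sum_range, Finset.mul_sum]
      refine Finset.sum_congr rfl fun i _ => ?_
      rw [pow_add, Nat.add_comm (k+1) i]
      ring
    set A := ∑ j ∈ Finset.range k, t ^ j * d j with hA
    set B := ∑ i ∈ Finset.range (K - (k + 1)), t ^ i * d (k + 1 + i) with hB
    have hAlt : A < t ^ k := partial_lt ht hd
    have hp : 0 < t ^ k := Nat.pow_pos (by omega)
    rw [hsplit, htail]
    have : A + t ^ k * d k + t ^ (k+1) * B = A + t ^ k * (d k + t * B) := by
      rw [pow_succ]; ring
    rw [this, Nat.add_mul_div_left _ _ hp, Nat.div_eq_of_lt hAlt, Nat.zero_add,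
      Nat.add_mul_mod_self_left, Nat.mod_eq_of_lt (hd k)]
  · rw [if_neg hk]
    have h1 : ∑ j ∈ Finset.range K, t ^ j * d j < t ^ K := partial_lt ht hd
    have h2 : t ^ K ≤ t ^ k := Nat.pow_le_pow_right (by omega) (by omega)
    rw [Nat.div_eq_of_lt (by omega), Nat.zero_mod]

/-! ### the map from `t`-distinct to `t`-regular -/

def blow (t : ℕ) (M : Multiset ℕ) : Multiset ℕ :=
  M.bind fun a => Multiset.replicate (t ^ ford t a) (fcore t a)

lemma blow_sum {t : ℕ} (M : Multiset ℕ) : (blow t M).sum = M.sum := by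
  unfold blow
  rw [Multiset.sum_bind]
  have : ∀ a : ℕ, (Multiset.replicate (t ^ ford t a) (fcore t a)).sum = a := by
    intro a
    rw [Multiset.sum_replicate, smul_eq_mul, decomp]
  calc (M.map fun a => (Multiset.replicate (t ^ ford t a) (fcore t a)).sum).sum
      = (M.map id).sum := by
        congr 1; exact Multiset.map_congr rfl fun a _ => this a
    _ = M.sum := by rw [Multiset.map_id]

lemma mem_blow {t b : ℕ} (ht : 2 ≤ t) {M : Multiset ℕ} :
    b ∈ blow t M ↔ ∃ a ∈ M, fcore t a = b := by
  unfold blow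
  simp only [Multiset.mem_bind, Multiset.eq_of_mem_replicate]
  constructor
  · rintro ⟨a, ha, hb⟩
    exact ⟨a, ha, (Multiset.eq_of_mem_replicate hb).symm⟩
  · rintro ⟨a, ha, hb⟩
    refine ⟨a, ha, ?_⟩
    rw [← hb]
    exact Multiset.mem_replicate.2 ⟨by positivity, rfl⟩

lemma count_blow {t c K : ℕ} (ht : 2 ≤ t) (hc : 0 < c) (hcd : ¬ t ∣ c)
    (M : Multiset ℕ) (hpos : ∀ a ∈ M, 0 < a) (hK : ∀ a ∈ M, a < t ^ K) :
    (blow t M).count c = ∑ k ∈ Finset.range K, t ^ k * M.count (t ^ k * c) := by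
  induction M using Multiset.induction_on with
  | empty => simp [blow]
  | cons a M ih =>
      have ha : 0 < a := hpos a (Multiset.mem_cons_self a M)
      have haK : a < t ^ K := hK a (Multiset.mem_cons_self a M)
      have ih' := ih (fun x hx => hpos x (Multiset.mem_cons_of_mem hx))
        (fun x hx => hK x (Multiset.mem_cons_of_mem hx))
      unfold blow at ih' ⊢
      rw [Multiset.cons_bind, Multiset.count_add, ih', Multiset.count_replicate]
      have key : (if fcore t a = c then t ^ ford t a else 0)
          = ∑ k ∈ Finset.range K, t ^ k * (if t ^ k * c = a then 1 else 0) := by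
        have hiff : ∀ k, t ^ k * c = a ↔ (k = ford t a ∧ c = fcore t a) := by
          intro k
          constructor
          · intro h
            have := pow_mul_inj ht hc hcd (fcore_pos ha) (not_dvd_fcore ht ha)
              (h.trans (decomp t a).symm)
            exact this
          · rintro ⟨rfl, rfl⟩; exact decomp t a
        by_cases hcc : fcore t a = c
        · rw [if_pos hcc]
          have hford : ford t a < K := by
            by_contra hcon
            have h1 : t ^ K ≤ t ^ ford t a := Nat.pow_le_pow_right (by omega) (by omega)
            have h2 : t ^ ford t a ≤ a := Nat.le_of_dvd ha (pow_padicValNat_dvd (p := t) (n := a))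
            omega
          have hcong : ∀ k ∈ Finset.range K,
              t ^ k * (if t ^ k * c = a then 1 else 0)
                = if ford t a = k then t ^ k else 0 := by
            intro k _
            by_cases hk : k = ford t a
            · subst hk
              rw [if_pos ((hiff _).2 ⟨rfl, hcc.symm⟩), if_pos rfl, mul_one]
            · rw [if_neg (fun h => hk ((hiff k).1 h).1),
                if_neg (fun h => hk h.symm), mul_zero]
          rw [Finset.sum_congr rfl hcong,
            Finset.sum_ite_eq (Finset.range K) (ford t a) (fun k => t ^ k),
            if_pos (Finset.mem_range.2 hford)]
        · rw [if_neg hcc]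
          rw [Finset.sum_congr rfl (fun k _ => by
            rw [if_neg (fun h => hcc ((hiff k).1 h).2.symm), mul_zero])]
          simp
      rw [key, ← Finset.sum_add_distrib]
      refine Finset.sum_congr rfl fun k _ => ?_
      rw [Multiset.count_cons]
      ring

/-! ### the map from `t`-regular to `t`-distinct -/

def chunk (t c f : ℕ) : Multiset ℕ :=
  ∑ k ∈ Finset.range (f + 1), Multiset.replicate (f / t ^ k % t) (t ^ k * c)

def spread (t : ℕ) (N : Multiset ℕ) : Multiset ℕ :=
  ∑ c ∈ N.toFinset, chunk t c (N.count c)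

lemma mem_chunk {t c f m : ℕ} (hm : m ∈ chunk t c f) : ∃ k, m = t ^ k * c := by
  unfold chunk at hm
  rw [Multiset.mem_sum] at hm
  obtain ⟨k, _, hk⟩ := hm
  exact ⟨k, Multiset.eq_of_mem_replicate hk⟩

lemma mem_spread {t m : ℕ} {N : Multiset ℕ} (hm : m ∈ spread t N) :
    ∃ c ∈ N, ∃ k, m = t ^ k * c := by
  unfold spread at hm
  rw [Multiset.mem_sum] at hm
  obtain ⟨c, hc, hmc⟩ := hm
  obtain ⟨k, hk⟩ := mem_chunk hmc
  exact ⟨c, Multiset.mem_toFinset.1 hc, k, hk⟩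

lemma count_chunk {t c c' f k : ℕ} (ht : 2 ≤ t) (hc : 0 < c) (hcd : ¬ t ∣ c)
    (hc' : 0 < c') (hcd' : ¬ t ∣ c') :
    (chunk t c f).count (t ^ k * c') = if c' = c then f / t ^ k % t else 0 := by
  unfold chunk
  rw [Multiset.count_sum']
  have hcong : ∀ j ∈ Finset.range (f + 1),
      (Multiset.replicate (f / t ^ j % t) (t ^ j * c)).count (t ^ k * c')
        = if c' = c ∧ j = k then f / t ^ j % t else 0 := by
    intro j _
    rw [Multiset.count_replicate]
    by_cases h : t ^ k * c' = t ^ j * c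
    · obtain ⟨hkj, hcc⟩ := pow_mul_inj ht hc' hcd' hc hcd h
      rw [if_pos h.symm, if_pos ⟨hcc, hkj.symm⟩]
    · rw [if_neg (fun h2 => h h2.symm), if_neg (fun h2 => h (by rw [h2.1, h2.2]))]
  rw [Finset.sum_congr rfl hcong]
  by_cases hcc : c' = c
  · simp only [hcc, eq_self_iff_true, true_and, if_true]
    have hsum := Finset.sum_ite_eq' (Finset.range (f + 1)) k (fun j => f / t ^ j % t)
    simp only [Finset.mem_range] at hsum
    rw [hsum]
    by_cases hk : k < f + 1
    · rw [if_pos hk]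
    · rw [if_neg hk]
      have hfk : f < t ^ k := by
        have h1 : f + 1 ≤ k := by omega
        have h2 : t ^ (f + 1) ≤ t ^ k := Nat.pow_le_pow_right (by omega) h1
        have h3 : f < t ^ (f + 1) := lt_of_lt_of_le (lt_pow_self' (t := t) (K := f) ht)
          (Nat.pow_le_pow_right (by omega) (by omega))
        omega
      rw [Nat.div_eq_of_lt hfk, Nat.zero_mod]
  · have hz : ∀ j ∈ Finset.range (f + 1),
        (if c' = c ∧ j = k then f / t ^ j % t else 0) = 0 := fun j _ => if_neg (by tauto)
    rw [Finset.sum_congr rfl hz, Finset.sum_const_zero, if_neg hcc]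

lemma count_spread {t c k : ℕ} (ht : 2 ≤ t) (hc : 0 < c) (hcd : ¬ t ∣ c)
    {N : Multiset ℕ} (hreg : ∀ a ∈ N, 0 < a ∧ ¬ t ∣ a) :
    (spread t N).count (t ^ k * c) = N.count c / t ^ k % t := by
  unfold spread
  rw [Multiset.count_sum']
  have hcong : ∀ c' ∈ N.toFinset,
      (chunk t c' (N.count c')).count (t ^ k * c)
        = if c = c' then N.count c' / t ^ k % t else 0 := by
    intro c' hc'
    have h := hreg c' (Multiset.mem_toFinset.1 hc')
    exact count_chunk ht h.1 h.2 hc hcd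
  rw [Finset.sum_congr rfl hcong]
  have := Finset.sum_ite_eq (N.toFinset) c (fun c' => N.count c' / t ^ k % t)
  rw [this]
  by_cases hmem : c ∈ N.toFinset
  · rw [if_pos hmem]
  · rw [if_neg hmem, Multiset.count_eq_zero_of_notMem (fun h => hmem (Multiset.mem_toFinset.2 h)),
      Nat.zero_div, Nat.zero_mod]

lemma chunk_sum {t c f : ℕ} (ht : 2 ≤ t) : (chunk t c f).sum = f * c := by
  unfold chunk
  rw [Multiset.sum_sum]
  have hcong : ∀ k ∈ Finset.range (f + 1),
      (Multiset.replicate (f / t ^ k % t) (t ^ k * c)).sum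
        = (t ^ k * (f / t ^ k % t)) * c := by
    intro k _
    rw [Multiset.sum_replicate, smul_eq_mul]; ring
  rw [Finset.sum_congr rfl hcong, ← Finset.sum_mul]
  congr 1
  exact digit_sum ht (lt_of_lt_of_le (lt_pow_self' ht)
    (Nat.pow_le_pow_right (by omega) (by omega)))

lemma spread_sum {t : ℕ} (ht : 2 ≤ t) {N : Multiset ℕ} : (spread t N).sum = N.sum := by
  unfold spread
  rw [Multiset.sum_sum]
  rw [Finset.sum_congr rfl (fun c _ => chunk_sum ht)]
  have := Finset.sum_multiset_map_count N (id : ℕ → ℕ)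
  rw [Multiset.map_id] at this
  rw [this]
  exact Finset.sum_congr rfl fun c _ => by simp

lemma count_spread_lt {t m : ℕ} (ht : 2 ≤ t) {N : Multiset ℕ}
    (hreg : ∀ a ∈ N, 0 < a ∧ ¬ t ∣ a) : (spread t N).count m < t := by
  by_cases hm : m ∈ spread t N
  · obtain ⟨c, hcN, k, rfl⟩ := mem_spread hm
    obtain ⟨h1, h2⟩ := hreg c hcN
    rw [count_spread ht h1 h2 hreg]
    exact Nat.mod_lt _ (by omega)
  · rw [Multiset.count_eq_zero_of_notMem hm]; omega

/-! ### injectivity -/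

lemma fcore_dvd (t a : ℕ) : fcore t a ∣ a := Dvd.intro_left (t ^ ford t a) (decomp t a)

lemma blow_inj {t n : ℕ} (ht : 2 ≤ t) {M M' : Multiset ℕ}
    (hpos : ∀ a ∈ M, 0 < a) (hpos' : ∀ a ∈ M', 0 < a)
    (hsum : M.sum = n) (hsum' : M'.sum = n)
    (hdis : ∀ a, M.count a < t) (hdis' : ∀ a, M'.count a < t)
    (h : blow t M = blow t M') : M = M' := by
  ext m
  rcases Nat.eq_zero_or_pos m with rfl | hm
  · rw [Multiset.count_eq_zero_of_notMem (fun hmem => by have := hpos 0 hmem; omega),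
      Multiset.count_eq_zero_of_notMem (fun hmem => by have := hpos' 0 hmem; omega)]
  · set k := ford t m with hk
    set c := fcore t m with hc
    have hcpos : 0 < c := fcore_pos hm
    have hcd : ¬ t ∣ c := not_dvd_fcore ht hm
    set K := n + k + 1 with hKdef
    have hbound : ∀ (L : Multiset ℕ), (∀ a ∈ L, 0 < a) → L.sum = n → ∀ a ∈ L, a < t ^ K := by
      intro L hLpos hLsum a haL
      have h1 : a ≤ L.sum := Multiset.single_le_sum (fun x _ => Nat.zero_le x) a haL
      have h2 : K < t ^ K := lt_pow_self' ht
      omega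
    have key : ∀ (L : Multiset ℕ), (∀ a ∈ L, 0 < a) → L.sum = n → (∀ a, L.count a < t) →
        L.count m = (blow t L).count c / t ^ k % t := by
      intro L hLpos hLsum hLdis
      rw [count_blow ht hcpos hcd L hLpos (hbound L hLpos hLsum),
        digit_extract ht (fun j => L.count (t ^ j * c)) (fun j => hLdis _) K k,
        if_pos (by omega)]
      rw [hc, hk, decomp t m]
    rw [key M hpos hsum hdis, key M' hpos' hsum' hdis', h]

lemma spread_inj {t : ℕ} (ht : 2 ≤ t) {N N' : Multiset ℕ}
    (hreg : ∀ a ∈ N, 0 < a ∧ ¬ t ∣ a) (hreg' : ∀ a ∈ N', 0 < a ∧ ¬ t ∣ a)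
    (h : spread t N = spread t N') : N = N' := by
  ext c
  by_cases hc : 0 < c ∧ ¬ t ∣ c
  · obtain ⟨hcpos, hcd⟩ := hc
    set K := N.count c + N'.count c + 1 with hK
    have key : ∀ (L : Multiset ℕ), (∀ a ∈ L, 0 < a ∧ ¬ t ∣ a) → L.count c < t ^ K →
        L.count c = ∑ k ∈ Finset.range K, t ^ k * (spread t L).count (t ^ k * c) := by
      intro L hLreg hLK
      rw [Finset.sum_congr rfl (fun k _ => by rw [count_spread ht hcpos hcd hLreg])]
      exact (digit_sum ht hLK).symm
    have hKlt : K < t ^ K := lt_pow_self' ht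
    rw [key N hreg (by omega), key N' hreg' (by omega), h]
  · rcases Nat.eq_zero_or_pos c with rfl | hcpos
    · rw [Multiset.count_eq_zero_of_notMem (fun hmem => by have := (hreg 0 hmem).1; omega),
        Multiset.count_eq_zero_of_notMem (fun hmem => by have := (hreg' 0 hmem).1; omega)]
    · have hcd : t ∣ c := by tauto
      rw [Multiset.count_eq_zero_of_notMem (fun hmem => (hreg c hmem).2 hcd),
        Multiset.count_eq_zero_of_notMem (fun hmem => (hreg' c hmem).2 hcd)]

end GlaisherAux


/-- A partition is `m`-regular if no part is divisible by `m`. -/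
def Nat.Partition.IsRegular {n : ℕ} (m : ℕ) (P : n.Partition) : Prop :=
  ∀ a ∈ P.parts, ¬ m ∣ a

/-- A partition is `m`-distinct if every part appears fewer than `m` times. -/
def Nat.Partition.IsDistinct {n : ℕ} (m : ℕ) (P : n.Partition) : Prop :=
  ∀ a, P.parts.count a < m

/-- A partition is `m`-flat if consecutive parts differ by less than `m` and the
smallest part is less than `m`; equivalently, every part is either less than `m`
or within less than `m` of some strictly smaller part. -/
def Nat.Partition.IsFlat {n : ℕ} (m : ℕ) (P : n.Partition) : Prop :=
  ∀ a ∈ P.parts, a < m ∨ ∃ b ∈ P.parts, b < a ∧ a - b < m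

/-- If `s` and `t` are coprime, the number of partitions of `n` simultaneously
`s`-regular and `t`-distinct equals the number of partitions of `n`
simultaneously `s`-regular and `t`-regular. -/
theorem regular_distinct_eq_doubly_regular (s t : ℕ) (hs : 2 ≤ s) (ht : 2 ≤ t)
    (hst : Nat.Coprime s t) (n : ℕ) :
    Nat.card {P : n.Partition // P.IsRegular s ∧ P.IsDistinct t} =
      Nat.card {P : n.Partition // P.IsRegular s ∧ P.IsRegular t} := by
  classical
  open GlaisherAux in
  -- the map from the distinct side to the regular side
  have hΦdef : ∀ P : {P : n.Partition // P.IsRegular s ∧ P.IsDistinct t},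
      ∃ Q : {P : n.Partition // P.IsRegular s ∧ P.IsRegular t},
        Q.1.parts = blow t P.1.parts := by
    rintro ⟨P, hPs, hPt⟩
    refine ⟨⟨⟨blow t P.parts, ?_, ?_⟩, ?_, ?_⟩, rfl⟩
    · intro b hb
      obtain ⟨a, ha, rfl⟩ := (mem_blow ht).1 hb
      exact fcore_pos (P.parts_pos ha)
    · rw [blow_sum, P.parts_sum]
    · intro b hb
      obtain ⟨a, ha, rfl⟩ := (mem_blow ht).1 hb
      exact fun hdvd => hPs a ha (hdvd.trans (fcore_dvd t a))
    · intro b hb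
      obtain ⟨a, ha, rfl⟩ := (mem_blow ht).1 hb
      exact not_dvd_fcore ht (P.parts_pos ha)
  choose Φ hΦ using hΦdef
  have hΦinj : Function.Injective Φ := by
    rintro ⟨P, hP⟩ ⟨P', hP'⟩ hEq
    have h : blow t P.parts = blow t P'.parts := by
      rw [← hΦ ⟨P, hP⟩, ← hΦ ⟨P', hP'⟩, hEq]
    refine Subtype.ext (Nat.Partition.ext ?_)
    exact blow_inj ht (fun a ha => P.parts_pos ha) (fun a ha => P'.parts_pos ha)
      P.parts_sum P'.parts_sum hP.2 hP'.2 h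
  -- the map from the regular side to the distinct side
  have hΨdef : ∀ Q : {P : n.Partition // P.IsRegular s ∧ P.IsRegular t},
      ∃ P : {P : n.Partition // P.IsRegular s ∧ P.IsDistinct t},
        P.1.parts = spread t Q.1.parts := by
    rintro ⟨Q, hQs, hQt⟩
    have hreg : ∀ a ∈ Q.parts, 0 < a ∧ ¬ t ∣ a :=
      fun a ha => ⟨Q.parts_pos ha, hQt a ha⟩
    refine ⟨⟨⟨spread t Q.parts, ?_, ?_⟩, ?_, ?_⟩, rfl⟩
    · intro m hm
      obtain ⟨c, hc, k, rfl⟩ := mem_spread hm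
      have := (hreg c hc).1
      positivity
    · rw [spread_sum ht, Q.parts_sum]
    · intro m hm
      obtain ⟨c, hc, k, rfl⟩ := mem_spread hm
      intro hdvd
      exact hQs c hc ((hst.pow_right k).dvd_of_dvd_mul_left hdvd)
    · intro m
      exact count_spread_lt ht hreg
  choose Ψ hΨ using hΨdef
  have hΨinj : Function.Injective Ψ := by
    rintro ⟨Q, hQ⟩ ⟨Q', hQ'⟩ hEq
    have h : spread t Q.parts = spread t Q'.parts := by
      rw [← hΨ ⟨Q, hQ⟩, ← hΨ ⟨Q', hQ'⟩, hEq]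
    refine Subtype.ext (Nat.Partition.ext ?_)
    exact spread_inj ht (fun a ha => ⟨Q.parts_pos ha, hQ.2 a ha⟩)
      (fun a ha => ⟨Q'.parts_pos ha, hQ'.2 a ha⟩) h
  exact le_antisymm (Nat.card_le_card_of_injective Φ hΦinj)
    (Nat.card_le_card_of_injective Ψ hΨinj)
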